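/- arXiv:2204.12599 — 6 statements merged into one kernel-verified Lean document; each statement's English description precedes it below -/
import Mathlib

section
/- For any peak Λ ≤ 1/2, in any swap Schelling game (G,b,Λ), no profitable swap can occur between two agents that are both below the peak (i.e., if agents i and j both satisfy f_i(σ) < Λ and f_j(σ) < Λ in a strategy profile σ, then the swap of i and j is not profitable). -/
open Finset

namespace SwapSchelling

variable {V : Type*} [Fintype V] [DecidableEq V]

open scoped Classical in
/-- The closed neighborhood `N[v]` of a node `v` in `G`, as a `Finset`. -/
noncomputable def closedNbhd (G : SimpleGraph V) (v : V) : Finset V :=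
  univ.filter (fun u => u = v ∨ G.Adj v u)

open scoped Classical in
/-- The degree `δ(v)` of a node `v` in `G`. -/
noncomputable def deg (G : SimpleGraph V) (v : V) : ℕ :=
  (univ.filter (fun u => G.Adj v u)).card

/-- The maximum degree `Δ(G)`. -/
noncomputable def maxDeg (G : SimpleGraph V) : ℕ := univ.sup (deg G)

/-- The minimum degree `δ(G)`. -/
noncomputable def minDeg (G : SimpleGraph V) : ℕ := sInf (Set.range (deg G))

open scoped Classical in
/-- `frac G c v` is the fraction of nodes in the closed neighborhood of `v` that have
the same color as `v` (that is, `f_i(σ)` for the agent `i` occupying node `v`). -/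
noncomputable def frac (G : SimpleGraph V) (c : V → Bool) (v : V) : ℝ :=
  (((closedNbhd G v).filter (fun u => c u = c v)).card : ℝ) / ((closedNbhd G v).card : ℝ)

/-- The coloring obtained from `c` after the agents on nodes `v` and `w` swap positions. -/
def swapColor (c : V → Bool) (v w : V) : V → Bool := c ∘ Equiv.swap v w

/-- A single-peaked utility function `p` with peak at `Λ`: `p 0 = 0`, `p` is strictly
increasing on `[0,Λ]`, `p Λ = 1`, and `p x = p (Λ(1-x)/(1-Λ))` for `x ∈ [Λ,1]`. -/
structure IsSinglePeaked (p : ℝ → ℝ) (Λ : ℝ) : Prop where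
  peak_mem : Λ ∈ Set.Ioo (0 : ℝ) 1
  map_zero : p 0 = 0
  strictMonoOn : StrictMonoOn p (Set.Icc 0 Λ)
  map_peak : p Λ = 1
  symm : ∀ x ∈ Set.Icc Λ 1, p x = p (Λ * (1 - x) / (1 - Λ))

/-- A strategy profile: a 2-coloring of the nodes with exactly `b` blue (`true`) nodes. -/
def IsProfile (c : V → Bool) (b : ℕ) : Prop :=
  (univ.filter (fun v => c v = true)).card = b

/-- The structural data of a swap Schelling game `(G, b, Λ)` with utility function `p`:
`G` is connected, there are `b` blue agents with `1 ≤ b ≤ n/2`, and `p` is a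
single-peaked utility function with peak `Λ`. -/
structure IsGame (G : SimpleGraph V) (b : ℕ) (Λ : ℝ) (p : ℝ → ℝ) : Prop where
  connected : G.Connected
  one_le_b : 1 ≤ b
  b_le_half : 2 * b ≤ Fintype.card V
  singlePeaked : IsSinglePeaked p Λ

/-- The swap of the two (differently colored) agents occupying nodes `v` and `w`
is profitable: both agents strictly increase their utility. -/
def ProfitableSwap (G : SimpleGraph V) (p : ℝ → ℝ) (c : V → Bool) (v w : V) : Prop :=
  c v ≠ c w ∧
  p (frac G (swapColor c v w) w) > p (frac G c v) ∧
  p (frac G (swapColor c v w) v) > p (frac G c w)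

/-- A swap equilibrium: no profitable swap exists. -/
def IsSwapEquilibrium (G : SimpleGraph V) (p : ℝ → ℝ) (c : V → Bool) : Prop :=
  ∀ v w, ¬ ProfitableSwap G p c v w

open scoped Classical in
/-- The degree of integration: the number of non-segregated agents. -/
noncomputable def DoI (G : SimpleGraph V) (c : V → Bool) : ℕ :=
  (univ.filter (fun v => frac G c v ≠ 1)).card

open scoped Classical in
/-- The number of monochromatic edges of `G` under the coloring `c`. -/
noncomputable def Phi (G : SimpleGraph V) (c : V → Bool) : ℕ :=
  (G.edgeFinset.filter (fun e => ∀ u ∈ e, ∀ w ∈ e, c u = c w)).card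

open scoped Classical in
/-- The number of edges of `G`. -/
noncomputable def numEdges (G : SimpleGraph V) : ℕ :=
  (univ.filter (fun e : Sym2 V => e ∈ G.edgeSet)).card

/-- A finset of nodes is an independent set of `G`. -/
def IsIndepSet (G : SimpleGraph V) (s : Finset V) : Prop :=
  ∀ u ∈ s, ∀ w ∈ s, ¬ G.Adj u w

open scoped Classical in
/-- The independence number `α(G)`. -/
noncomputable def indepNum (G : SimpleGraph V) : ℕ :=
  univ.sup (fun s : Finset V => if IsIndepSet G s then s.card else 0)

open scoped Classical in
/-- The degree of `v` inside the subgraph of `G` induced by the node set `s`. -/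
noncomputable def degOn (G : SimpleGraph V) (s : Finset V) (v : V) : ℕ :=
  (s.filter (fun u => G.Adj v u)).card


lemma frac_nonneg' (G : SimpleGraph V) (c : V → Bool) (v : V) : 0 ≤ frac G c v := by
  unfold frac
  positivity

lemma swap_frac_bounds (G : SimpleGraph V) (c : V → Bool) (v w : V) (hvw : c v ≠ c w) :
    1 - frac G c w ≤ frac G (swapColor c v w) w ∧ frac G (swapColor c v w) w ≤ 1 := by
  classical
  set S := closedNbhd G w with hS
  have hwS : w ∈ S := by simp [hS, closedNbhd]
  have hn : (0 : ℝ) < S.card := by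
    exact_mod_cast Finset.card_pos.2 ⟨w, hwS⟩
  have hcw : swapColor c v w w = c v := by
    simp [swapColor, Equiv.swap_apply_right]
  have hkey : S.card ≤ (S.filter (fun u => swapColor c v w u = swapColor c v w w)).card
      + (S.filter (fun u => c u = c w)).card := by
    have hsub : insert w ((S.filter (fun u => ¬ c u = c w)).erase v)
        ⊆ S.filter (fun u => swapColor c v w u = swapColor c v w w) := by
      intro u hu
      rcases Finset.mem_insert.1 hu with rfl | hu
      · exact Finset.mem_filter.2 ⟨hwS, rfl⟩
      · obtain ⟨huv, hu⟩ := Finset.mem_erase.1 hu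
        obtain ⟨huS, huc⟩ := Finset.mem_filter.1 hu
        have huw : u ≠ w := by
          intro h; subst h; exact huc rfl
        refine Finset.mem_filter.2 ⟨huS, ?_⟩
        rw [hcw]
        have : Equiv.swap v w u = u := Equiv.swap_apply_of_ne_of_ne huv huw
        show c (Equiv.swap v w u) = c v
        rw [this]
        revert huc hvw
        cases c u <;> cases c v <;> cases c w <;> simp
    have hwmem : w ∉ (S.filter (fun u => ¬ c u = c w)).erase v := by
      simp
    have hc1 : ((S.filter (fun u => ¬ c u = c w)).erase v).card + 1
        ≤ (S.filter (fun u => swapColor c v w u = swapColor c v w w)).card := by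
      have := Finset.card_le_card hsub
      rwa [Finset.card_insert_of_notMem hwmem] at this
    have hc2 : (S.filter (fun u => ¬ c u = c w)).card - 1
        ≤ ((S.filter (fun u => ¬ c u = c w)).erase v).card :=
      Finset.pred_card_le_card_erase
    have hc3 : (S.filter (fun u => c u = c w)).card
        + (S.filter (fun u => ¬ c u = c w)).card = S.card :=
      Finset.card_filter_add_card_filter_not _
    omega
  constructor
  · unfold frac
    rw [← hS, sub_le_iff_le_add, ← add_div, le_div_iff₀ hn, one_mul]
    have : (S.card : ℝ) ≤ ((S.filter (fun u => swapColor c v w u = swapColor c v w w)).card : ℝ)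
        + (S.filter (fun u => c u = c w)).card := by exact_mod_cast hkey
    convert this using 3 <;> simp
  · unfold frac
    rw [← hS, div_le_one hn]
    exact_mod_cast Finset.card_filter_le _ _

lemma step_lt {p : ℝ → ℝ} {Λ : ℝ} (sp : IsSinglePeaked p Λ) (hΛ : Λ ≤ 1 / 2)
    {x y z : ℝ} (hx : 0 ≤ x) (hxΛ : x < Λ) (hy : 0 ≤ y) (hyΛ : y < Λ)
    (hz1 : 1 - y ≤ z) (hz2 : z ≤ 1) (hp : p x < p z) : x < y := by
  obtain ⟨hΛ0, hΛ1⟩ := sp.peak_mem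
  have hΛ' : (0:ℝ) < 1 - Λ := by linarith
  have hzΛ : Λ ≤ z := by linarith
  have hsymm := sp.symm z ⟨hzΛ, hz2⟩
  set g := Λ * (1 - z) / (1 - Λ) with hg
  have hg0 : 0 ≤ g := by
    apply div_nonneg _ (le_of_lt hΛ')
    nlinarith
  have hgy : g ≤ y := by
    rw [hg, div_le_iff₀ hΛ']
    nlinarith
  have hgΛ : g < Λ := lt_of_le_of_lt hgy hyΛ
  rw [hsymm] at hp
  by_contra hxy
  push_neg at hxy
  have hgx : g ≤ x := le_trans hgy hxy
  have := sp.strictMonoOn.monotoneOn ⟨hg0, le_of_lt hgΛ⟩ ⟨hx, le_of_lt hxΛ⟩ hgx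
  linarith

/-- For any peak `Λ ≤ 1/2`, in any swap Schelling game `(G,b,Λ)`, no
profitable swap can occur between two agents that are both below the peak. -/
theorem no_profitable_swap_below_peak
    {V : Type*} [Fintype V] [DecidableEq V] (G : SimpleGraph V) (b : ℕ) (Λ : ℝ) (p : ℝ → ℝ)
    (hgame : IsGame G b Λ p) (hΛ : Λ ≤ 1 / 2)
    (c : V → Bool) (hc : IsProfile c b) (v w : V)
    (hv : frac G c v < Λ) (hw : frac G c w < Λ) :
    ¬ ProfitableSwap G p c v w := by
  rintro ⟨hne, h1, h2⟩
  have sp := hgame.singlePeaked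
  have hswapeq : swapColor c v w = swapColor c w v := by
    funext u; simp [swapColor, Equiv.swap_comm]
  have b1 := swap_frac_bounds G c v w hne
  have b2 := swap_frac_bounds G c w v hne.symm
  rw [← hswapeq] at b2
  have hlt1 : frac G c v < frac G c w :=
    step_lt sp hΛ (frac_nonneg' G c v) hv (frac_nonneg' G c w) hw b1.1 b1.2 h1
  have hlt2 : frac G c w < frac G c v :=
    step_lt sp hΛ (frac_nonneg' G c w) hw (frac_nonneg' G c v) hv b2.1 b2.2 h2
  linarith

end SwapSchelling
end

section
/- For any peak Λ ≤ 1/2, in any swap Schelling game (G,b,Λ) on an almost regular graph G, no profitable swap can occur between an agent below the peak and an agent above the peak. -/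
open Finset

namespace SwapSchelling

variable {V : Type*} [Fintype V] [DecidableEq V]

section Aux

open scoped Classical

lemma mem_closedNbhd {G : SimpleGraph V} {v u : V} :
    u ∈ closedNbhd G v ↔ u = v ∨ G.Adj v u := by
  simp [closedNbhd]

lemma card_closedNbhd (G : SimpleGraph V) (v : V) :
    (closedNbhd G v).card = deg G v + 1 := by
  have h : closedNbhd G v = insert v (univ.filter (fun u => G.Adj v u)) := by
    ext u
    simp [mem_closedNbhd, or_comm]
  rw [h, card_insert_of_notMem (by simp)]
  rfl

/-- same-color count, including the node itself -/
noncomputable def sC (G : SimpleGraph V) (c : V → Bool) (v : V) : ℕ :=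
  ((closedNbhd G v).filter (fun u => c u = c v)).card

lemma frac_eq (G : SimpleGraph V) (c : V → Bool) (v : V) :
    frac G c v = (sC G c v : ℝ) / ((deg G v : ℝ) + 1) := by
  rw [frac, card_closedNbhd]
  push_cast
  rfl

lemma one_le_sC (G : SimpleGraph V) (c : V → Bool) (v : V) : 1 ≤ sC G c v := by
  rw [sC, Nat.one_le_iff_ne_zero, ← Nat.pos_iff_ne_zero, card_pos]
  exact ⟨v, by simp [mem_closedNbhd]⟩

lemma sC_le (G : SimpleGraph V) (c : V → Bool) (v : V) : sC G c v ≤ deg G v + 1 := by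
  rw [← card_closedNbhd]
  exact card_filter_le _ _

/-- key counting lemma: after the swap, the same-color count at `w` satisfies
`sC' + sC + a = deg w + 2`. -/
lemma sC_swap (G : SimpleGraph V) (c : V → Bool) (v w : V) (hvw : c v ≠ c w) :
    sC G (swapColor c v w) w + sC G c w + (if G.Adj v w then 1 else 0)
      = deg G w + 2 := by
  have hne : v ≠ w := fun h => hvw (by rw [h])
  have hcw : swapColor c v w w = c v := by simp [swapColor, Equiv.swap_apply_right]
  have hset : (closedNbhd G w).filter (fun u => swapColor c v w u = swapColor c v w w)
      = insert w (((closedNbhd G w).filter (fun u => ¬ (c u = c w))).erase v) := by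
    ext u
    simp only [mem_filter, mem_insert, mem_erase]
    constructor
    · rintro ⟨hu, hcu⟩
      by_cases h1 : u = w
      · exact Or.inl h1
      · refine Or.inr ⟨?_, hu, ?_⟩
        · rintro rfl
          rw [hcw] at hcu
          simp only [swapColor, Function.comp, Equiv.swap_apply_left] at hcu
          exact hvw hcu.symm
        · rw [hcw] at hcu
          rw [swapColor] at hcu
          simp only [Function.comp] at hcu
          by_cases h2 : u = v
          · exact absurd h2 (by rintro rfl; rw [Equiv.swap_apply_left] at hcu; exact hvw (by rw [hcu] at hvw; simp at hvw) )
          · rw [Equiv.swap_apply_of_ne_of_ne h2 h1] at hcu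
            rw [hcu]
            exact hvw
    · rintro (rfl | ⟨huv, hu, hcu⟩)
      · refine ⟨by simp [mem_closedNbhd], rfl⟩
      · refine ⟨hu, ?_⟩
        rw [hcw, swapColor]
        simp only [Function.comp]
        have huw : u ≠ w := by
          rintro rfl
          exact hcu rfl
        rw [Equiv.swap_apply_of_ne_of_ne huv huw]
        revert hcu hvw
        cases c u <;> cases c v <;> cases c w <;> simp
  have hwnot : w ∉ ((closedNbhd G w).filter (fun u => ¬ (c u = c w))).erase v := by
    simp
  rw [sC, hset, card_insert_of_notMem hwnot]
  have hfil : ((closedNbhd G w).filter (fun u => ¬ (c u = c w))).card + sC G c w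
      = deg G w + 1 := by
    rw [sC, ← card_closedNbhd G w, add_comm]
    exact card_filter_add_card_filter_not _
  by_cases hadj : G.Adj v w
  · have hvmem : v ∈ (closedNbhd G w).filter (fun u => ¬ (c u = c w)) := by
      simp [mem_closedNbhd, hadj.symm, hvw]
    have := card_erase_add_one hvmem
    simp only [hadj, if_true]
    omega
  · have hvnot : v ∉ (closedNbhd G w).filter (fun u => ¬ (c u = c w)) := by
      simp only [mem_filter, mem_closedNbhd]
      rintro ⟨h1 | h1, -⟩
      · exact hne h1
      · exact hadj h1.symm
    rw [erase_eq_of_notMem hvnot]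
    simp only [hadj, if_false]
    omega

end Aux

lemma below_imp {p : ℝ → ℝ} {Λ : ℝ} (hp : IsSinglePeaked p Λ) {x y : ℝ}
    (hx0 : 0 ≤ x) (hxΛ : x < Λ) (hy0 : 0 ≤ y) (h : p y > p x) : x < y := by
  by_contra hc
  push_neg at hc
  have h1 : p y ≤ p x :=
    hp.strictMonoOn.monotoneOn ⟨hy0, le_of_lt (lt_of_le_of_lt hc hxΛ)⟩ ⟨hx0, hxΛ.le⟩ hc
  linarith

lemma above_imp {p : ℝ → ℝ} {Λ : ℝ} (hp : IsSinglePeaked p Λ) {x y : ℝ}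
    (hx : Λ < x) (hx1 : x ≤ 1) (hy : Λ < y) (hy1 : y ≤ 1) (h : p y > p x) : y < x := by
  obtain ⟨hΛ0, hΛ1⟩ := hp.peak_mem
  have h1mΛ : (0:ℝ) < 1 - Λ := by linarith
  by_contra hc
  push_neg at hc
  have hqx : Λ * (1 - x) / (1 - Λ) ∈ Set.Icc (0:ℝ) Λ := by
    constructor
    · apply div_nonneg _ h1mΛ.le
      nlinarith
    · rw [div_le_iff₀ h1mΛ]; nlinarith
  have hqy : Λ * (1 - y) / (1 - Λ) ∈ Set.Icc (0:ℝ) Λ := by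
    constructor
    · apply div_nonneg _ h1mΛ.le
      nlinarith
    · rw [div_le_iff₀ h1mΛ]; nlinarith
  have hle : Λ * (1 - y) / (1 - Λ) ≤ Λ * (1 - x) / (1 - Λ) := by
    apply div_le_div_of_nonneg_right ?_ h1mΛ.le
    nlinarith
  have h2 : p y ≤ p x := by
    rw [hp.symm y ⟨hy.le, hy1⟩, hp.symm x ⟨hx.le, hx1⟩]
    exact hp.strictMonoOn.monotoneOn hqy hqx hle
  linarith

lemma swapColor_comm (c : V → Bool) (v w : V) : swapColor c w v = swapColor c v w := by
  unfold swapColor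
  rw [Equiv.swap_comm]

/-- For any peak `Λ ≤ 1/2`, in games on almost regular graphs, no profitable
swap can occur between an agent below the peak and an agent above the peak. -/
theorem no_profitable_swap_different_sides_almost_regular
    {V : Type*} [Fintype V] [DecidableEq V] (G : SimpleGraph V) (b : ℕ) (Λ : ℝ) (p : ℝ → ℝ)
    (hgame : IsGame G b Λ p) (hΛ : Λ ≤ 1 / 2)
    (hreg : maxDeg G ≤ minDeg G + 1)
    (c : V → Bool) (hc : IsProfile c b) (v w : V)
    (hv : frac G c v < Λ) (hw : Λ < frac G c w) :
    ¬ ProfitableSwap G p c v w := by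
  classical
  rintro ⟨hcvw, hi, hj⟩
  have hp := hgame.singlePeaked
  obtain ⟨hΛ0, hΛ1⟩ := hp.peak_mem
  set c' := swapColor c v w with hc'
  set dv := deg G v with hdv
  set dw := deg G w with hdw
  set sv := sC G c v with hsv
  set sw := sC G c w with hsw
  set sv' := sC G c' v with hsv'
  set sw' := sC G c' w with hsw'
  set a : ℕ := if G.Adj v w then 1 else 0 with ha
  -- the two counting identities
  have keyw : sw' + sw + a = dw + 2 := sC_swap G c v w hcvw
  have keyv : sv' + sv + a = dv + 2 := by
    have h := sC_swap G c w v (Ne.symm hcvw)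
    rw [swapColor_comm] at h
    have haa : (if G.Adj w v then 1 else 0) = a := by
      rw [ha, if_congr (G.adj_comm w v) rfl rfl]
    rw [haa] at h
    exact h
  -- basic bounds
  have hsv1 : 1 ≤ sv := one_le_sC G c v
  have hsw1 : 1 ≤ sw := one_le_sC G c w
  have hswle : sw ≤ dw + 1 := sC_le G c w
  have hsvle : sv ≤ dv + 1 := sC_le G c v
  have hale : a ≤ 1 := by rw [ha]; split <;> omega
  -- fractions as real quotients
  have hDv : (0:ℝ) < (dv:ℝ) + 1 := by positivity
  have hDw : (0:ℝ) < (dw:ℝ) + 1 := by positivity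
  have efv : frac G c v = (sv:ℝ) / ((dv:ℝ) + 1) := by rw [frac_eq]
  have efw : frac G c w = (sw:ℝ) / ((dw:ℝ) + 1) := by rw [frac_eq]
  have efv' : frac G c' v = (sv':ℝ) / ((dv:ℝ) + 1) := by rw [frac_eq]
  have efw' : frac G c' w = (sw':ℝ) / ((dw:ℝ) + 1) := by rw [frac_eq]
  -- bounds needed for the peak lemmas
  have hfw1 : frac G c w ≤ 1 := by
    rw [efw, div_le_one hDw]
    exact_mod_cast hswle
  have hfv'1 : frac G c' v ≤ 1 := by
    rw [efv', div_le_one hDv]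
    have : sv' ≤ dv + 1 := by omega
    exact_mod_cast this
  have hfvlb : (1:ℝ) - frac G c v ≤ frac G c' v := by
    rw [efv, efv', sub_le_iff_le_add, ← add_div, le_div_iff₀ hDv, one_mul]
    have h5 : dv + 1 ≤ sv' + sv := by omega
    exact_mod_cast h5
  have hfv'Λ : Λ < frac G c' v := by
    have h6 : (1:ℝ) - Λ < frac G c' v := by linarith
    linarith
  have hfv0 : 0 ≤ frac G c v := by rw [efv]; positivity
  have hfw'0 : 0 ≤ frac G c' w := by rw [efw']; positivity
  -- consequences of profitability
  have hI : frac G c v < frac G c' w := below_imp hp hfv0 hv hfw'0 hi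
  have hJ : frac G c' v < frac G c w := above_imp hp hw hfw1 hfv'Λ hfv'1 hj
  -- translate into product inequalities
  rw [efv, efw'] at hI
  rw [efv', efw] at hJ
  rw [div_lt_div_iff₀ hDv hDw] at hI
  rw [div_lt_div_iff₀ hDv hDw] at hJ
  -- cast the counting identities to ℝ
  have keywR : (sw':ℝ) + sw + a = (dw:ℝ) + 2 := by exact_mod_cast keyw
  have keyvR : (sv':ℝ) + sv + a = (dv:ℝ) + 2 := by exact_mod_cast keyv
  have hdvdw : dv ≤ dw + 1 := by
    have h1 : dv ≤ maxDeg G := by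
      rw [hdv, maxDeg]; exact Finset.le_sup (mem_univ v)
    have h2 : minDeg G ≤ dw := by
      rw [hdw, minDeg]; exact Nat.sInf_le ⟨w, rfl⟩
    omega
  clear_value c' dv dw sv sw sv' sw' a
  clear hc' hdv hdw hsv hsw hsv' hsw' ha hi hj hv hw hc
  rcases (by omega : a = 1 ∨ a = 0) with hadj | hadj
  · -- adjacent: a = 1
    have haR : (a:ℝ) = 1 := by exact_mod_cast hadj
    have esw' : (sw':ℝ) = (dw:ℝ) + 1 - sw := by linarith
    have esv' : (sv':ℝ) = (dv:ℝ) + 1 - sv := by linarith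
    rw [esw'] at hI
    rw [esv'] at hJ
    linarith only [hI, hJ]
  · -- non-adjacent: a = 0
    have haR : (a:ℝ) = 0 := by exact_mod_cast hadj
    have esw' : (sw':ℝ) = (dw:ℝ) + 2 - sw := by linarith
    have esv' : (sv':ℝ) = (dv:ℝ) + 2 - sv := by linarith
    rw [esw'] at hI
    rw [esv'] at hJ
    -- hI : sv*(dw+1) < (dw+2-sw)*(dv+1),  hJ : (dv+2-sv)*(dw+1) < sw*(dv+1)
    have hdlt : (dw:ℝ) < (dv:ℝ) := by linarith only [hI, hJ]
    have hdltn : dw < dv := by exact_mod_cast hdlt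
    have hdveq : dv = dw + 1 := by omega
    have hdvR : (dv:ℝ) = (dw:ℝ) + 1 := by exact_mod_cast hdveq
    rw [hdvR] at hI hJ
    have hu : ((sv * (dw+1) + sw * (dw+2) : ℕ) : ℝ) < (((dw+2) * (dw+2) : ℕ) : ℝ) := by
      push_cast
      linarith only [hI]
    have hl : (((dw+3) * (dw+1) : ℕ) : ℝ) < ((sv * (dw+1) + sw * (dw+2) : ℕ) : ℝ) := by
      push_cast
      linarith only [hJ]
    have hun : sv * (dw+1) + sw * (dw+2) < (dw+2) * (dw+2) := by exact_mod_cast hu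
    have hln : (dw+3) * (dw+1) < sv * (dw+1) + sw * (dw+2) := by exact_mod_cast hl
    have hY : (dw+3) * (dw+1) + 1 = (dw+2) * (dw+2) := by ring
    have h7 : (dw+2) * (dw+2) ≤ sv * (dw+1) + sw * (dw+2) := by
      rw [← hY]; exact hln
    exact absurd hun (not_lt.mpr h7)

end SwapSchelling
end

section
/- For any peak Λ > 1/2, the swap Schelling game played on the cycle graph with 6 nodes with b = 3 blue agents and 3 red agents admits no swap equilibrium. -/
open Finset

namespace SwapSchelling

variable {V : Type*} [Fintype V] [DecidableEq V]

def cnt (c : Fin 6 → Bool) (v : Fin 6) : ℕ :=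
  (if c (v-1) = c v then 1 else 0) + 1 + (if c (v+1) = c v then 1 else 0)

/-- Utility rank of a count `k ∈ {1,2,3}`: count 3 is worst, 2 is best. -/
def rank (k : ℕ) : ℕ := if k = 3 then 0 else k

lemma nbhd_eq (v : Fin 6) : closedNbhd (SimpleGraph.cycleGraph 6) v = {v-1, v, v+1} := by
  ext u
  simp only [closedNbhd, mem_filter, mem_univ, true_and]
  revert u v
  decide

lemma filter_card_eq (c : Fin 6 → Bool) (v : Fin 6) :
    (({v-1, v, v+1} : Finset (Fin 6)).filter (fun u => c u = c v)).card = cnt c v := by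
  revert c v; decide

lemma frac_eq_s5 (c : Fin 6 → Bool) (v : Fin 6) :
    frac (SimpleGraph.cycleGraph 6) c v = (cnt c v : ℝ) / 3 := by
  rw [frac, nbhd_eq]
  rw [show (({v-1, v, v+1} : Finset (Fin 6)).card : ℝ) = 3 by norm_cast; revert v; decide]
  congr 2
  rw [Finset.filter_congr_decidable]
  exact filter_card_eq c v

lemma cnt_bounds (c : Fin 6 → Bool) (v : Fin 6) : 1 ≤ cnt c v ∧ cnt c v ≤ 3 := by
  unfold cnt; split_ifs <;> omega

lemma p_one (Λ : ℝ) (hΛ : 1 / 2 < Λ) (p : ℝ → ℝ) (hp : IsSinglePeaked p Λ) :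
    p 1 = 0 := by
  have h1 := hp.peak_mem.2
  have := hp.symm 1 ⟨le_of_lt h1, le_refl 1⟩
  simpa [hp.map_zero] using this

lemma p_third (Λ : ℝ) (hΛ : 1 / 2 < Λ) (p : ℝ → ℝ) (hp : IsSinglePeaked p Λ) :
    0 < p (1/3 : ℝ) := by
  have h13 : (1/3 : ℝ) ≤ Λ := by linarith
  have := hp.strictMonoOn ⟨le_refl 0, le_of_lt hp.peak_mem.1⟩
    ⟨by norm_num, h13⟩ (by norm_num)
  simpa [hp.map_zero] using this

lemma p_two_thirds (Λ : ℝ) (hΛ : 1 / 2 < Λ) (p : ℝ → ℝ) (hp : IsSinglePeaked p Λ) :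
    p (1/3 : ℝ) < p (2/3 : ℝ) := by
  have h13 : (1/3 : ℝ) ∈ Set.Icc 0 Λ := ⟨by norm_num, by linarith⟩
  rcases le_or_gt (2/3 : ℝ) Λ with h | h
  · exact hp.strictMonoOn h13 ⟨by norm_num, h⟩ (by norm_num)
  · have hΛ1 : Λ < 1 := hp.peak_mem.2
    have hsym := hp.symm (2/3) ⟨le_of_lt h, by norm_num⟩
    rw [hsym]
    have hpos : (0:ℝ) < 1 - Λ := by linarith
    set y : ℝ := Λ * (1 - 2/3) / (1 - Λ) with hy
    have hy13 : (1/3 : ℝ) < y := by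
      rw [hy, lt_div_iff₀ hpos]; ring_nf; linarith
    have hyΛ : y ≤ Λ := by
      rw [hy, div_le_iff₀ hpos]; nlinarith
    exact hp.strictMonoOn h13 ⟨by linarith, hyΛ⟩ hy13

lemma p_lt_of_rank (Λ : ℝ) (hΛ : 1 / 2 < Λ) (p : ℝ → ℝ) (hp : IsSinglePeaked p Λ)
    (k₁ k₂ : ℕ) (h₁ : 1 ≤ k₁ ∧ k₁ ≤ 3) (h₂ : 1 ≤ k₂ ∧ k₂ ≤ 3)
    (h : rank k₁ < rank k₂) : p ((k₁ : ℝ) / 3) < p ((k₂ : ℝ) / 3) := by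
  obtain ⟨ha, hb⟩ := h₁; obtain ⟨hc, hd⟩ := h₂
  have h0 := p_one Λ hΛ p hp
  have h1 := p_third Λ hΛ p hp
  have h2 := p_two_thirds Λ hΛ p hp
  interval_cases k₁ <;> interval_cases k₂ <;>
    simp_all [rank] <;> norm_num <;> linarith

lemma combinatorial_key : ∀ c : Fin 6 → Bool,
    (univ.filter (fun v => c v = true)).card = 3 →
    ∃ v w : Fin 6, c v ≠ c w ∧
      rank (cnt c v) < rank (cnt (swapColor c v w) w) ∧
      rank (cnt c w) < rank (cnt (swapColor c v w) v) := by
  decide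

/-- For any peak `Λ > 1/2`, the swap Schelling game on the cycle with six
nodes with `b = 3` blue and `3` red agents admits no swap equilibrium. -/
theorem no_swap_equilibrium_on_cycle_six
    (Λ : ℝ) (hΛ : 1 / 2 < Λ) (p : ℝ → ℝ) (hp : IsSinglePeaked p Λ)
    (c : Fin 6 → Bool) (hc : IsProfile c 3) :
    ¬ IsSwapEquilibrium (SimpleGraph.cycleGraph 6) p c := by
  have hc' : (univ.filter (fun v => c v = true)).card = 3 := by
    rw [IsProfile] at hc
    rw [← hc]
  obtain ⟨v, w, hvw, h1, h2⟩ := combinatorial_key c hc'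
  intro hse
  apply hse v w
  refine ⟨hvw, ?_, ?_⟩
  · rw [frac_eq_s5, frac_eq_s5]
    exact p_lt_of_rank Λ hΛ p hp _ _ (cnt_bounds c v) (cnt_bounds _ w) h1
  · rw [frac_eq_s5, frac_eq_s5]
    exact p_lt_of_rank Λ hΛ p hp _ _ (cnt_bounds c w) (cnt_bounds _ v) h2

end SwapSchelling
end

section
/- For peak Λ = 1/2, there exists a swap Schelling game (G,b,1/2) admitting an improving response cycle, i.e., a finite sequence of strategy profiles σ_0, σ_1, …, σ_k with k ≥ 1 and σ_k = σ_0 such that for every t < k, the profile σ_{t+1} is obtained from σ_t by a profitable swap of two agents. Consequently, these games admit no ordinal potential function. -/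
open Finset

namespace SwapSchelling

variable {V : Type*} [Fintype V] [DecidableEq V]

/-! ### Auxiliary construction for Statement 6 -/

def adjL : List (ℕ × ℕ) := [(0,1),(1,2),(2,6),(2,7),(2,8),(3,4),(3,5),(3,7),(3,8),(4,7)]

def adjB (i j : Fin 9) : Bool := decide ((i.val, j.val) ∈ adjL ∨ (j.val, i.val) ∈ adjL)

def ex : SimpleGraph (Fin 9) where
  Adj i j := adjB i j = true
  symm := ⟨fun i j h => (by decide : ∀ i j, adjB i j = true → adjB j i = true) i j h⟩
  loopless := ⟨fun i h => (by decide : ∀ i, ¬ adjB i i = true) i h⟩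

instance : DecidableRel ex.Adj := fun i j => decidable_of_iff (adjB i j = true) Iff.rfl

lemma ex_connected : ex.Connected :=
  (SimpleGraph.connected_iff ex).mpr ⟨by decide, inferInstance⟩

lemma closedNbhd_ex (v : Fin 9) :
    closedNbhd ex v = univ.filter (fun u => u = v ∨ ex.Adj v u) := by
  ext u; simp [closedNbhd]

lemma frac_eval (c : Fin 9 → Bool) (v : Fin 9) {a d : ℕ}
    (h1 : ((univ.filter (fun u => u = v ∨ ex.Adj v u)).filter (fun u => c u = c v)).card = a)
    (h2 : (univ.filter (fun u => u = v ∨ ex.Adj v u)).card = d) :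
    frac ex c v = (a : ℝ) / d := by
  rw [frac, closedNbhd_ex, Finset.filter_congr_decidable, h1, h2]

lemma p_eq_min {p : ℝ → ℝ} (hp : IsSinglePeaked p (1/2)) {x : ℝ} (hx0 : 0 ≤ x) (hx1 : x ≤ 1) :
    p x = p (min x (1-x)) := by
  rcases le_total x (1/2) with h|h
  · rw [min_eq_left (by linarith)]
  · rw [min_eq_right (by linarith)]
    have h2 := hp.symm x ⟨by linarith, hx1⟩
    rw [h2]
    norm_num

lemma p_lt {p : ℝ → ℝ} (hp : IsSinglePeaked p (1/2)) {x y : ℝ}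
    (hx0 : 0 ≤ x) (hx1 : x ≤ 1) (hy0 : 0 ≤ y) (hy1 : y ≤ 1)
    (h : min x (1-x) < min y (1-y)) : p x < p y := by
  rw [p_eq_min hp hx0 hx1, p_eq_min hp hy0 hy1]
  have hmx : min x (1-x) ≤ 1/2 := by
    rcases le_total x (1/2) with h'|h'
    · exact min_le_of_left_le h'
    · exact min_le_of_right_le (by linarith)
  have hmy : min y (1-y) ≤ 1/2 := by
    rcases le_total y (1/2) with h'|h'
    · exact min_le_of_left_le h'
    · exact min_le_of_right_le (by linarith)
  exact hp.strictMonoOn ⟨le_min hx0 (by linarith), hmx⟩ ⟨le_min hy0 (by linarith), hmy⟩ h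

def b0 : Fin 9 → Bool := fun v => decide (v.val ∈ [2,5,6,7])
def b1 : Fin 9 → Bool := fun v => decide (v.val ∈ [2,3,5,7])
def b2 : Fin 9 → Bool := fun v => decide (v.val ∈ [0,3,5,7])
def b3 : Fin 9 → Bool := fun v => decide (v.val ∈ [0,1,3,7])
def b4 : Fin 9 → Bool := fun v => decide (v.val ∈ [0,1,6,7])
def b5 : Fin 9 → Bool := fun v => decide (v.val ∈ [1,2,6,7])

lemma prof0 (p : ℝ → ℝ) (hp : IsSinglePeaked p (1/2)) :
    ProfitableSwap ex p b0 3 6 := by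
  refine ⟨by decide, ?_, ?_⟩
  · rw [frac_eval b0 3 (a := 3) (d := 5) (by decide) (by decide),
       frac_eval (swapColor b0 3 6) 6 (a := 1) (d := 2) (by decide) (by decide)]
    exact p_lt hp (by norm_num) (by norm_num) (by norm_num) (by norm_num) (by norm_num [min_def])
  · rw [frac_eval b0 6 (a := 2) (d := 2) (by decide) (by decide),
       frac_eval (swapColor b0 3 6) 3 (a := 3) (d := 5) (by decide) (by decide)]
    exact p_lt hp (by norm_num) (by norm_num) (by norm_num) (by norm_num) (by norm_num [min_def])

lemma prof1 (p : ℝ → ℝ) (hp : IsSinglePeaked p (1/2)) :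
    ProfitableSwap ex p b1 0 2 := by
  refine ⟨by decide, ?_, ?_⟩
  · rw [frac_eval b1 0 (a := 2) (d := 2) (by decide) (by decide),
       frac_eval (swapColor b1 0 2) 2 (a := 4) (d := 5) (by decide) (by decide)]
    exact p_lt hp (by norm_num) (by norm_num) (by norm_num) (by norm_num) (by norm_num [min_def])
  · rw [frac_eval b1 2 (a := 2) (d := 5) (by decide) (by decide),
       frac_eval (swapColor b1 0 2) 0 (a := 1) (d := 2) (by decide) (by decide)]
    exact p_lt hp (by norm_num) (by norm_num) (by norm_num) (by norm_num) (by norm_num [min_def])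

lemma prof2 (p : ℝ → ℝ) (hp : IsSinglePeaked p (1/2)) :
    ProfitableSwap ex p b2 1 5 := by
  refine ⟨by decide, ?_, ?_⟩
  · rw [frac_eval b2 1 (a := 2) (d := 3) (by decide) (by decide),
       frac_eval (swapColor b2 1 5) 5 (a := 1) (d := 2) (by decide) (by decide)]
    exact p_lt hp (by norm_num) (by norm_num) (by norm_num) (by norm_num) (by norm_num [min_def])
  · rw [frac_eval b2 5 (a := 2) (d := 2) (by decide) (by decide),
       frac_eval (swapColor b2 1 5) 1 (a := 2) (d := 3) (by decide) (by decide)]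
    exact p_lt hp (by norm_num) (by norm_num) (by norm_num) (by norm_num) (by norm_num [min_def])

lemma prof3 (p : ℝ → ℝ) (hp : IsSinglePeaked p (1/2)) :
    ProfitableSwap ex p b3 3 6 := by
  refine ⟨by decide, ?_, ?_⟩
  · rw [frac_eval b3 3 (a := 2) (d := 5) (by decide) (by decide),
       frac_eval (swapColor b3 3 6) 6 (a := 1) (d := 2) (by decide) (by decide)]
    exact p_lt hp (by norm_num) (by norm_num) (by norm_num) (by norm_num) (by norm_num [min_def])
  · rw [frac_eval b3 6 (a := 2) (d := 2) (by decide) (by decide),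
       frac_eval (swapColor b3 3 6) 3 (a := 4) (d := 5) (by decide) (by decide)]
    exact p_lt hp (by norm_num) (by norm_num) (by norm_num) (by norm_num) (by norm_num [min_def])

lemma prof4 (p : ℝ → ℝ) (hp : IsSinglePeaked p (1/2)) :
    ProfitableSwap ex p b4 0 2 := by
  refine ⟨by decide, ?_, ?_⟩
  · rw [frac_eval b4 0 (a := 2) (d := 2) (by decide) (by decide),
       frac_eval (swapColor b4 0 2) 2 (a := 4) (d := 5) (by decide) (by decide)]
    exact p_lt hp (by norm_num) (by norm_num) (by norm_num) (by norm_num) (by norm_num [min_def])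
  · rw [frac_eval b4 2 (a := 2) (d := 5) (by decide) (by decide),
       frac_eval (swapColor b4 0 2) 0 (a := 1) (d := 2) (by decide) (by decide)]
    exact p_lt hp (by norm_num) (by norm_num) (by norm_num) (by norm_num) (by norm_num [min_def])

lemma prof5 (p : ℝ → ℝ) (hp : IsSinglePeaked p (1/2)) :
    ProfitableSwap ex p b5 1 5 := by
  refine ⟨by decide, ?_, ?_⟩
  · rw [frac_eval b5 1 (a := 2) (d := 3) (by decide) (by decide),
       frac_eval (swapColor b5 1 5) 5 (a := 1) (d := 2) (by decide) (by decide)]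
    exact p_lt hp (by norm_num) (by norm_num) (by norm_num) (by norm_num) (by norm_num [min_def])
  · rw [frac_eval b5 5 (a := 2) (d := 2) (by decide) (by decide),
       frac_eval (swapColor b5 1 5) 1 (a := 2) (d := 3) (by decide) (by decide)]
    exact p_lt hp (by norm_num) (by norm_num) (by norm_num) (by norm_num) (by norm_num [min_def])


def cols : List (Fin 9 → Bool) := [b0, b1, b2, b3, b4, b5]


/-- For peak `Λ = 1/2`, there exists a swap Schelling game admitting an
improving response cycle; consequently, it admits no ordinal potential function. -/
theorem exists_improving_response_cycle
    (p : ℝ → ℝ) (hp : IsSinglePeaked p (1 / 2)) :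
    ∃ (n : ℕ) (G : SimpleGraph (Fin n)) (b : ℕ),
      IsGame G b (1 / 2) p ∧
      (∃ (k : ℕ) (s : ℕ → Fin n → Bool), 1 ≤ k ∧ IsProfile (s 0) b ∧ s k = s 0 ∧
        ∀ t < k, ∃ v w, ProfitableSwap G p (s t) v w ∧ s (t + 1) = swapColor (s t) v w) ∧
      ¬ ∃ F : (Fin n → Bool) → ℝ, ∀ (c : Fin n → Bool) (v w : Fin n),
          IsProfile c b → ProfitableSwap G p c v w → F c < F (swapColor c v w) := by
  refine ⟨9, ex, 4, ⟨ex_connected, by norm_num, by simp, hp⟩, ?_, ?_⟩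
  · refine ⟨6, fun t => cols.getD t b0, by norm_num, by unfold IsProfile; decide, by decide, ?_⟩
    intro t ht
    interval_cases t
    · exact ⟨3, 6, prof0 p hp, by decide⟩
    · exact ⟨0, 2, prof1 p hp, by decide⟩
    · exact ⟨1, 5, prof2 p hp, by decide⟩
    · exact ⟨3, 6, prof3 p hp, by decide⟩
    · exact ⟨0, 2, prof4 p hp, by decide⟩
    · exact ⟨1, 5, prof5 p hp, by decide⟩
  · rintro ⟨F, hF⟩
    have e0 : swapColor b0 3 6 = b1 := by decide
    have e1 : swapColor b1 0 2 = b2 := by decide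
    have e2 : swapColor b2 1 5 = b3 := by decide
    have e3 : swapColor b3 3 6 = b4 := by decide
    have e4 : swapColor b4 0 2 = b5 := by decide
    have e5 : swapColor b5 1 5 = b0 := by decide
    have h0 := hF b0 3 6 (by unfold IsProfile; decide) (prof0 p hp); rw [e0] at h0
    have h1 := hF b1 0 2 (by unfold IsProfile; decide) (prof1 p hp); rw [e1] at h1
    have h2 := hF b2 1 5 (by unfold IsProfile; decide) (prof2 p hp); rw [e2] at h2
    have h3 := hF b3 3 6 (by unfold IsProfile; decide) (prof3 p hp); rw [e3] at h3
    have h4 := hF b4 0 2 (by unfold IsProfile; decide) (prof4 p hp); rw [e4] at h4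
    have h5 := hF b5 1 5 (by unfold IsProfile; decide) (prof5 p hp); rw [e5] at h5
    linarith


end SwapSchelling
end

section
/- For peak Λ = 1/2, every swap Schelling game (G,b,1/2) played on a bipartite graph G (with 1 ≤ b ≤ n/2) admits a swap equilibrium. -/
open Finset

namespace SwapSchelling

variable {V : Type*} [Fintype V] [DecidableEq V]

-- auxiliary lemmas

open scoped Classical

lemma mem_closedNbhd_self (G : SimpleGraph V) (v : V) : v ∈ closedNbhd G v := by
  simp [closedNbhd]

lemma card_closedNbhd_pos (G : SimpleGraph V) (v : V) : 0 < (closedNbhd G v).card :=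
  card_pos.2 ⟨v, mem_closedNbhd_self G v⟩

lemma symm01 {p : ℝ → ℝ} (hp : IsSinglePeaked p (1/2)) {x : ℝ}
    (hx : x ∈ Set.Icc (0:ℝ) 1) : p x = p (1 - x) := by
  have key : ∀ y : ℝ, (1:ℝ)/2 ≤ y → y ≤ 1 → p y = p (1 - y) := by
    intro y h1 h2
    have := hp.symm y ⟨h1, h2⟩
    have harg : (1:ℝ)/2 * (1 - y) / (1 - 1/2) = 1 - y := by ring
    rwa [harg] at this
  rcases le_or_gt (1/2 : ℝ) x with h | h
  · exact key x h hx.2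
  · have := key (1 - x) (by linarith [hx.1]) (by linarith [hx.1])
    simpa using this.symm

lemma p_nonneg {p : ℝ → ℝ} (hp : IsSinglePeaked p (1/2)) {x : ℝ}
    (hx : x ∈ Set.Icc (0:ℝ) 1) : 0 ≤ p x := by
  have key : ∀ y : ℝ, 0 ≤ y → y ≤ 1/2 → 0 ≤ p y := by
    intro y h1 h2
    have := hp.strictMonoOn.monotoneOn (Set.mem_Icc.2 ⟨le_refl 0, by norm_num⟩)
      (Set.mem_Icc.2 ⟨h1, h2⟩) h1
    rw [hp.map_zero] at this; exact this
  rcases le_or_gt x (1/2 : ℝ) with h | h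
  · exact key x hx.1 h
  · rw [symm01 hp hx]
    exact key (1 - x) (by linarith [hx.2]) (by linarith)

lemma frac_mem (G : SimpleGraph V) (c : V → Bool) (v : V) :
    frac G c v ∈ Set.Icc (0:ℝ) 1 := by
  have hpos : (0:ℝ) < ((closedNbhd G v).card : ℝ) := by
    exact_mod_cast card_closedNbhd_pos G v
  constructor
  · exact div_nonneg (Nat.cast_nonneg _) (le_of_lt hpos)
  · rw [frac, div_le_one hpos]
    exact_mod_cast card_le_card (filter_subset _ _)

lemma key_lemma (G : SimpleGraph V) (p : ℝ → ℝ) (hp : IsSinglePeaked p (1/2))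
    (c : V → Bool)
    (hblue : ∀ v, c v = true → ∀ u, G.Adj v u → c u = false)
    (v w : V) (hv : c v = true) (hw : c w = false) :
    ¬ ProfitableSwap G p c v w := by
  rintro ⟨hne, h1, h2⟩
  have hvw : v ≠ w := by intro h; rw [h, hw] at hv; exact Bool.noConfusion hv
  set c' : V → Bool := swapColor c v w with hc'
  have hc'v : c' v = false := by simp [hc', swapColor, hw]
  have hc'w : c' w = true := by simp [hc', swapColor, hv]
  have hc'other : ∀ u, u ≠ v → u ≠ w → c' u = c u := by
    intro u h1 h2
    simp [hc', swapColor, Equiv.swap_apply_of_ne_of_ne h1 h2]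
  -- frac c v = 1 / k_v
  have hfilter_v : (closedNbhd G v).filter (fun u => c u = c v) = {v} := by
    ext u
    simp only [mem_filter, mem_singleton, closedNbhd, mem_univ, true_and, hv]
    constructor
    · rintro ⟨h | h, hc⟩
      · exact h
      · rw [hblue v hv u h] at hc; exact Bool.noConfusion hc
    · rintro rfl; exact ⟨Or.inl rfl, hv⟩
  have hkv : (0:ℝ) < ((closedNbhd G v).card : ℝ) := by
    exact_mod_cast card_closedNbhd_pos G v
  have hfracv : frac G c v = 1 / ((closedNbhd G v).card : ℝ) := by
    rw [frac, hfilter_v]; simp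
  by_cases hadj : G.Adj v w
  · -- adjacent case
    have hwmem : w ∈ closedNbhd G v := by simp [closedNbhd, hadj]
    have hvmemw : v ∈ closedNbhd G w := by simp [closedNbhd, hadj.symm]
    -- frac c' v = (k_v - 1)/k_v
    have hfilt' : (closedNbhd G v).filter (fun u => c' u = c' v)
        = (closedNbhd G v).erase w := by
      ext u
      simp only [mem_filter, mem_erase, hc'v]
      constructor
      · rintro ⟨hu, hcu⟩
        refine ⟨?_, hu⟩
        rintro rfl
        rw [hc'w] at hcu; exact Bool.noConfusion hcu
      · rintro ⟨huw, hu⟩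
        refine ⟨hu, ?_⟩
        by_cases huv : u = v
        · subst huv; exact hc'v
        · rw [hc'other u huv huw]
          rcases mem_filter.1 hu with ⟨-, h | h⟩
          · exact absurd h huv
          · exact hblue v hv u h
    have hcard' : ((closedNbhd G v).erase w).card = (closedNbhd G v).card - 1 :=
      card_erase_of_mem hwmem
    have hk1 : 1 ≤ (closedNbhd G v).card := card_closedNbhd_pos G v
    have hfracv' : frac G c' v
        = (((closedNbhd G v).card : ℝ) - 1) / ((closedNbhd G v).card : ℝ) := by
      rw [frac, hfilt', hcard']
      congr 1
      push_cast [Nat.cast_sub hk1]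
      ring
    -- p (frac c' v) = p (frac c v)
    have heq1 : p (frac G c' v) = p (frac G c v) := by
      rw [hfracv', hfracv]
      have := symm01 hp (x := (((closedNbhd G v).card : ℝ) - 1) / ((closedNbhd G v).card : ℝ))
        ⟨by
          apply div_nonneg _ (le_of_lt hkv)
          have : (1:ℝ) ≤ ((closedNbhd G v).card : ℝ) := by exact_mod_cast hk1
          linarith, by
          rw [div_le_one hkv]; linarith⟩
      rw [this]
      congr 1
      field_simp
      ring
    -- frac c w and frac c' w
    set k := (closedNbhd G w).card with hk
    set B := ((closedNbhd G w).filter (fun u => c u = true)).card with hB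
    have hvfil : v ∈ (closedNbhd G w).filter (fun u => c u = true) :=
      mem_filter.2 ⟨hvmemw, hv⟩
    have hB1 : 1 ≤ B := card_pos.2 ⟨v, hvfil⟩
    have hBk : B ≤ k := card_le_card (filter_subset _ _)
    have hfw : (closedNbhd G w).filter (fun u => c u = c w) =
        (closedNbhd G w) \ ((closedNbhd G w).filter (fun u => c u = true)) := by
      ext u
      simp only [mem_filter, mem_sdiff, hw]
      constructor
      · rintro ⟨hu, hcu⟩
        exact ⟨hu, fun h => by rw [h.2] at hcu; exact Bool.noConfusion hcu⟩
      · rintro ⟨hu, hcu⟩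
        refine ⟨hu, ?_⟩
        cases hcub : c u
        · rfl
        · exact absurd ⟨hu, hcub⟩ hcu
    have hcardfw : ((closedNbhd G w).filter (fun u => c u = c w)).card = k - B := by
      rw [hfw, card_sdiff_of_subset (filter_subset _ _)]
    have hfw' : (closedNbhd G w).filter (fun u => c' u = c' w)
        = insert w (((closedNbhd G w).filter (fun u => c u = true)).erase v) := by
      ext u
      simp only [mem_filter, mem_insert, mem_erase, hc'w]
      constructor
      · rintro ⟨hu, hcu⟩
        by_cases huw : u = w
        · exact Or.inl huw
        · refine Or.inr ⟨?_, hu, ?_⟩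
          · rintro rfl; rw [hc'v] at hcu; exact Bool.noConfusion hcu
          · by_cases huv : u = v
            · subst huv; exact hv
            · rw [← hc'other u huv huw]; exact hcu
      · rintro (rfl | ⟨huv, hu, hcu⟩)
        · exact ⟨mem_closedNbhd_self G _, hc'w⟩
        · refine ⟨hu, ?_⟩
          by_cases huw : u = w
          · subst huw; exact hc'w
          · rw [hc'other u huv huw]; exact hcu
    have hcardfw' : ((closedNbhd G w).filter (fun u => c' u = c' w)).card = B := by
      rw [hfw']
      rw [card_insert_of_notMem (by
        simp only [mem_erase, mem_filter, hw]
        rintro ⟨-, -, h⟩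
        exact Bool.noConfusion h)]
      rw [card_erase_of_mem hvfil]
      omega
    have hkpos : (0:ℝ) < (k : ℝ) := by exact_mod_cast card_closedNbhd_pos G w
    have hfracw : frac G c w = ((k : ℝ) - (B : ℝ)) / (k : ℝ) := by
      rw [frac, hcardfw, ← hk]
      congr 1
      push_cast [Nat.cast_sub hBk]
      ring
    have hfracw' : frac G c' w = (B : ℝ) / (k : ℝ) := by
      rw [frac, hcardfw', ← hk]
    have heq2 : p (frac G c w) = p (frac G c' w) := by
      rw [hfracw, hfracw']
      have hBk' : (B : ℝ) ≤ (k : ℝ) := by exact_mod_cast hBk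
      have := symm01 hp (x := ((k : ℝ) - (B : ℝ)) / (k : ℝ))
        ⟨div_nonneg (by linarith) (le_of_lt hkpos), by
          rw [div_le_one hkpos]
          have : (0:ℝ) ≤ (B:ℝ) := Nat.cast_nonneg _
          linarith⟩
      rw [this]
      congr 1
      field_simp
      ring
    rw [heq1] at h2
    rw [heq2] at h2
    exact absurd h1 (lt_asymm h2)
  · -- non-adjacent case: red agent at v becomes fully segregated
    have hfull : (closedNbhd G v).filter (fun u => c' u = c' v) = closedNbhd G v := by
      apply filter_true_of_mem
      intro u hu
      rw [hc'v]
      rcases mem_filter.1 hu with ⟨-, h | h⟩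
      · subst h; exact hc'v
      · have huv : u ≠ v := fun he => by subst he; exact G.loopless.irrefl u h
        have huw : u ≠ w := fun he => by subst he; exact hadj h
        rw [hc'other u huv huw]
        exact hblue v hv u h
    have hfracv'1 : frac G c' v = 1 := by
      rw [frac, hfull]
      exact div_self (ne_of_gt hkv)
    have hp1 : p (1:ℝ) = 0 := by
      have := symm01 hp (x := (1:ℝ)) ⟨zero_le_one, le_refl 1⟩
      simpa [hp.map_zero] using this
    rw [hfracv'1, hp1] at h2
    exact absurd (p_nonneg hp (frac_mem G c w)) (not_le.2 h2)



/-- For peak `Λ = 1/2`, every swap Schelling game on a bipartite graph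
admits a swap equilibrium. -/
theorem exists_swap_equilibrium_bipartite
    {V : Type*} [Fintype V] [DecidableEq V] (G : SimpleGraph V) (b : ℕ) (p : ℝ → ℝ)
    (hgame : IsGame G b (1 / 2) p) (hbip : G.Colorable 2) :
    ∃ c : V → Bool, IsProfile c b ∧ IsSwapEquilibrium G p c := by
  have hb := hgame.b_le_half
  have hp := hgame.singlePeaked
  classical
  obtain ⟨χ⟩ := hbip
  have hfin : ∀ x : Fin 2, (x = 1) ↔ ¬(x = 0) := by decide
  have hsum : (univ.filter (fun v => χ v = 0)).card + (univ.filter (fun v => χ v = 1)).card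
      = Fintype.card V := by
    have h : (univ.filter (fun v => χ v = 1)) = (univ.filter (fun v => ¬ χ v = 0)) := by
      ext v
      simp only [mem_filter, mem_univ, true_and, hfin]
    rw [h]
    simpa using Finset.card_filter_add_card_filter_not
      (s := (univ : Finset V)) (p := fun v => χ v = 0)
  obtain ⟨i, hi⟩ : ∃ i : Fin 2, b ≤ (univ.filter (fun v => χ v = i)).card := by
    by_contra h
    push_neg at h
    have h0 := h 0
    have h1 := h 1
    omega
  obtain ⟨S, hSsub, hScard⟩ := Finset.exists_subset_card_eq hi
  set c : V → Bool := fun v => decide (v ∈ S) with hc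
  have hblue : ∀ x, c x = true → ∀ u, G.Adj x u → c u = false := by
    intro x hx u hadj
    simp only [hc, decide_eq_true_eq] at hx
    simp only [hc, decide_eq_false_iff_not]
    intro huS
    have hxX : χ x = i := (mem_filter.1 (hSsub hx)).2
    have huX : χ u = i := (mem_filter.1 (hSsub huS)).2
    exact χ.valid hadj (hxX.trans huX.symm)
  refine ⟨c, ?_, ?_⟩
  · have h : (univ.filter (fun v => c v = true)) = S := by
      ext v
      simp [hc]
    unfold IsProfile
    rw [h, hScard]
  · intro v w hps
    cases hcv : c v with
    | true =>
      cases hcw : c w with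
      | true => exact hps.1 (hcv.trans hcw.symm)
      | false => exact key_lemma G p hp c hblue v w hcv hcw hps
    | false =>
      cases hcw : c w with
      | false => exact hps.1 (hcv.trans hcw.symm)
      | true =>
        have hswap : swapColor c w v = swapColor c v w := by
          unfold swapColor
          rw [Equiv.swap_comm]
        exact key_lemma G p hp c hblue w v hcw hcv
          ⟨hps.1.symm, by rw [hswap]; exact hps.2.2, by rw [hswap]; exact hps.2.1⟩


end SwapSchelling
end

section
/- In any swap equilibrium of any swap Schelling game (G,b,Λ), agents of different colors cannot both be segregated: it is impossible that some blue agent i and some red agent j satisfy f_i(σ) = 1 and f_j(σ) = 1. -/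
open Finset

namespace SwapSchelling

variable {V : Type*} [Fintype V] [DecidableEq V]

open scoped Classical

lemma p_one_eq_zero {p : ℝ → ℝ} {Λ : ℝ} (hp : IsSinglePeaked p Λ) : p 1 = 0 := by
  have h := hp.symm 1 ⟨le_of_lt hp.peak_mem.2, le_refl 1⟩
  simpa [hp.map_zero] using h

lemma p_pos {p : ℝ → ℝ} {Λ : ℝ} (hp : IsSinglePeaked p Λ) {x : ℝ}
    (hx : x ∈ Set.Ioo (0:ℝ) 1) : 0 < p x := by
  obtain ⟨hΛ0, hΛ1⟩ := hp.peak_mem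
  by_cases h : x ≤ Λ
  · have := hp.strictMonoOn ⟨le_refl 0, le_of_lt hΛ0⟩ ⟨le_of_lt hx.1, h⟩ hx.1
    simpa [hp.map_zero] using this
  · push_neg at h
    have hx1 : x ≤ 1 := le_of_lt hx.2
    have hsym := hp.symm x ⟨le_of_lt h, hx1⟩
    set y := Λ * (1 - x) / (1 - Λ) with hy
    have hden : (0:ℝ) < 1 - Λ := by linarith
    have hy0 : 0 < y := by
      apply div_pos _ hden
      have : (0:ℝ) < 1 - x := by linarith [hx.2]
      positivity
    have hyΛ : y ≤ Λ := by
      rw [hy, div_le_iff₀ hden]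
      nlinarith
    have := hp.strictMonoOn ⟨le_refl 0, le_of_lt hΛ0⟩ ⟨le_of_lt hy0, hyΛ⟩ hy0
    rw [hsym]
    simpa [hp.map_zero] using this

lemma seg_color {G : SimpleGraph V} {c : V → Bool} {v : V}
    (h : frac G c v = 1) : ∀ u ∈ closedNbhd G v, c u = c v := by
  have hpos : 0 < (closedNbhd G v).card :=
    card_pos.2 ⟨v, mem_closedNbhd_self G v⟩
  have hne : ((closedNbhd G v).card : ℝ) ≠ 0 := by positivity
  rw [frac, div_eq_one_iff_eq hne] at h
  have hcard : ((closedNbhd G v).filter (fun u => c u = c v)).card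
      = (closedNbhd G v).card := Nat.cast_injective h
  have heq : (closedNbhd G v).filter (fun u => c u = c v) = closedNbhd G v :=
    Finset.eq_of_subset_of_card_le (filter_subset _ _) (le_of_eq hcard.symm)
  intro u hu
  have := heq.symm ▸ hu
  exact (mem_filter.1 this).2

lemma swap_frac {G : SimpleGraph V} {c : V → Bool} {v w : V}
    (hseg : frac G c w = 1) (hne : c v ≠ c w) (hvw : v ≠ w) (hnadj : ¬ G.Adj w v) :
    frac G (swapColor c v w) w = 1 / ((closedNbhd G w).card : ℝ) := by
  have hcolor := seg_color hseg
  have hfilter : (closedNbhd G w).filter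
      (fun u => swapColor c v w u = swapColor c v w w) = {w} := by
    ext u
    simp only [mem_filter, mem_singleton]
    constructor
    · rintro ⟨hu, hcu⟩
      by_contra huw
      have huadj : G.Adj w u := by
        rcases (mem_filter.1 hu).2 with h | h
        · exact absurd h huw
        · exact h
      have huv : u ≠ v := fun h => hnadj (h ▸ huadj)
      have h1 : swapColor c v w u = c u := by
        simp [swapColor, Equiv.swap_apply_of_ne_of_ne huv huw]
      have h2 : swapColor c v w w = c v := by
        simp [swapColor, Equiv.swap_apply_right]
      rw [h1, h2] at hcu
      have : c u = c w := hcolor u hu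
      exact hne (hcu.symm.trans this)
    · rintro rfl
      exact ⟨mem_closedNbhd_self _ _, rfl⟩
  rw [frac, hfilter]
  simp

lemma exists_neighbor {G : SimpleGraph V} (hconn : G.Connected)
    (hcard : 2 ≤ Fintype.card V) (v : V) : ∃ u, G.Adj v u := by
  obtain ⟨u, hu⟩ := Fintype.exists_ne_of_one_lt_card (by omega) v
  obtain ⟨W⟩ := hconn v u
  cases W with
  | nil => exact absurd rfl hu
  | cons h _ => exact ⟨_, h⟩

lemma two_le_closedNbhd {G : SimpleGraph V} (hconn : G.Connected)
    (hcard : 2 ≤ Fintype.card V) (v : V) : 2 ≤ (closedNbhd G v).card := by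
  obtain ⟨u, hu⟩ := exists_neighbor hconn hcard v
  have h1 : v ∈ closedNbhd G v := mem_closedNbhd_self G v
  have h2 : u ∈ closedNbhd G v := by simp [closedNbhd, hu]
  have : ({v, u} : Finset V) ⊆ closedNbhd G v := by
    intro x hx; rcases Finset.mem_insert.1 hx with rfl | hx
    · exact h1
    · exact (Finset.mem_singleton.1 hx) ▸ h2
  calc 2 = ({v, u} : Finset V).card := by
        rw [Finset.card_insert_of_notMem (by simp [G.ne_of_adj hu]),
          Finset.card_singleton]
    _ ≤ _ := Finset.card_le_card this

/-- In any swap equilibrium, agents of different colors cannot both be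
segregated. -/
theorem no_two_segregated_colors_in_equilibrium
    {V : Type*} [Fintype V] [DecidableEq V] (G : SimpleGraph V) (b : ℕ) (Λ : ℝ) (p : ℝ → ℝ)
    (hgame : IsGame G b Λ p)
    (c : V → Bool) (hc : IsProfile c b) (hse : IsSwapEquilibrium G p c)
    (v w : V) (hvw : c v ≠ c w) :
    ¬ (frac G c v = 1 ∧ frac G c w = 1) := by
  rintro ⟨hv, hw⟩
  have hp := hgame.singlePeaked
  have hcard : 2 ≤ Fintype.card V := le_trans (by have := hgame.one_le_b; omega) hgame.b_le_half
  have hvwne : v ≠ w := fun h => hvw (h ▸ rfl)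
  have hnadjwv : ¬ G.Adj w v := fun h => by
    have : c v = c w := seg_color hw v (by simp [closedNbhd, h])
    exact hvw this
  have hnadjvw : ¬ G.Adj v w := fun h => hnadjwv h.symm
  -- frac after swap at w
  have hfw := swap_frac hw hvw hvwne hnadjwv
  have hfv : frac G (swapColor c v w) v = 1 / ((closedNbhd G v).card : ℝ) := by
    have : swapColor c v w = swapColor c w v := by
      funext u; simp [swapColor, Equiv.swap_comm]
    rw [this]
    exact swap_frac hv (Ne.symm hvw) (Ne.symm hvwne) hnadjvw
  have key : ∀ x : V, (1 : ℝ) / ((closedNbhd G x).card : ℝ) ∈ Set.Ioo (0:ℝ) 1 := by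
    intro x
    have h2 := two_le_closedNbhd hgame.connected hcard x
    have h2' : (2:ℝ) ≤ ((closedNbhd G x).card : ℝ) := by exact_mod_cast h2
    constructor
    · positivity
    · rw [div_lt_one (by linarith)]; linarith
  have hpw : 0 < p (frac G (swapColor c v w) w) := by
    rw [hfw]; exact p_pos hp (key w)
  have hpv : 0 < p (frac G (swapColor c v w) v) := by
    rw [hfv]; exact p_pos hp (key v)
  have hps : ProfitableSwap G p c v w := by
    refine ⟨hvw, ?_, ?_⟩
    · rw [hv, p_one_eq_zero hp]; exact hpw
    · rw [hw, p_one_eq_zero hp]; exact hpv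
  exact hse v w hps

end SwapSchelling
end
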